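/- Let H ∈ (1/2, 1), β ∈ (1−2H, 1], set α_H = H(2H−1) and φ(y) = α_H |y|^{2H−2} for y ≠ 0. Let (λ_i)_{i≥1} be a nondecreasing sequence of positive real numbers and let (a_i)_{i≥1} be a sequence of real numbers with Σ_{i≥1} λ_i^{β−1} a_i² < ∞. Then there exists a constant C > 0, depending only on H, such that for every N ∈ ℕ and every t > 0, one has ∫₀^t ∫₀^t ( Σ_{i≥N+1} e^{−λ_i(2t−u−v)} a_i² ) φ(u−v) du dv ≤ C λ_{N+1}^{−(2H+β−1)} Σ_{i≥1} λ_i^{β−1} a_i². -/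

import Mathlib

open MeasureTheory Set Real

private lemma aux_exp_le {g x : ℝ} (hg : 0 ≤ g) (hx : 0 < x) :
    Real.exp (-x) ≤ g ^ g * Real.exp (-g) * x ^ (-g) := by
  rcases eq_or_lt_of_le hg with h | h
  · rw [← h]
    simp [Real.exp_le_one_iff, hx.le]
  · have hlog : Real.log (x / g) ≤ x / g - 1 := Real.log_le_sub_one_of_pos (div_pos hx h)
    have h2 : g * Real.log (x / g) ≤ x - g := by
      have h1 := mul_le_mul_of_nonneg_left hlog h.le
      have h3 : g * (x / g - 1) = x - g := by field_simp
      linarith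
    have h3 : Real.log x * g + -x ≤ Real.log g * g + -g := by
      rw [Real.log_div hx.ne' h.ne'] at h2; nlinarith
    calc Real.exp (-x) = Real.exp (Real.log x * g + -x) * x ^ (-g) := by
          rw [Real.rpow_def_of_pos hx, ← Real.exp_add]; congr 1; ring
      _ ≤ Real.exp (Real.log g * g + -g) * x ^ (-g) := by
          exact mul_le_mul_of_nonneg_right (Real.exp_le_exp.2 h3)
            (Real.rpow_nonneg hx.le _)
      _ = g ^ g * Real.exp (-g) * x ^ (-g) := by
          rw [Real.exp_add, Real.rpow_def_of_pos h]

private lemma aux_abs_rpow_II {d : ℝ} (hd : -1 < d) (a b : ℝ) :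
    IntervalIntegrable (fun x => |x| ^ d) volume a b := by
  have hpos : ∀ c : ℝ, 0 ≤ c → IntervalIntegrable (fun x => |x| ^ d) volume 0 c := by
    intro c hc
    rw [intervalIntegrable_iff_integrableOn_Ioc_of_le hc]
    refine ((intervalIntegrable_iff_integrableOn_Ioc_of_le hc).1
      (intervalIntegral.intervalIntegrable_rpow' hd)).congr_fun ?_ measurableSet_Ioc
    intro x hx
    simp [abs_of_pos hx.1]
  have hall : ∀ c : ℝ, IntervalIntegrable (fun x => |x| ^ d) volume 0 c := by
    intro c
    rcases le_or_gt 0 c with hc | hc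
    · exact hpos c hc
    · have h1 : IntervalIntegrable (fun x => |x| ^ d) volume (-c) 0 :=
        (hpos (-c) (by linarith)).symm
      have h2 := (IntervalIntegrable.iff_comp_neg (by simp)).mp h1
      simp only [abs_neg, neg_neg, neg_zero] at h2
      exact h2.symm
  exact (hall a).symm.trans (hall b)

private lemma aux_refl (f : ℝ → ℝ) {t : ℝ} (ht : 0 ≤ t) :
    ∫ u in Ioo (0:ℝ) t, f (t - u) = ∫ x in Ioo (0:ℝ) t, f x := by
  rw [← integral_Ioc_eq_integral_Ioo, ← integral_Ioc_eq_integral_Ioo,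
    ← intervalIntegral.integral_of_le ht, ← intervalIntegral.integral_of_le ht,
    intervalIntegral.integral_comp_sub_left f t]
  simp

private lemma aux_int_exp_rpow {m g : ℝ} (hm : 0 < m) (hg1 : g < 1) :
    IntegrableOn (fun x => x ^ (-g) * Real.exp (-(m * x))) (Ioi (0:ℝ)) := by
  have h := integrableOn_rpow_mul_exp_neg_mul_rpow (s := -g) (p := 1)
    (by linarith) one_pos hm
  refine h.congr_fun (fun x hx => ?_) measurableSet_Ioi
  dsimp only; rw [Real.rpow_one, neg_mul]

private lemma aux_key1 {m g : ℝ} (hm : 0 < m) (hg0 : 0 ≤ g) (hg1 : g < 1) (t : ℝ) :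
    (∫ x in Ioo (0:ℝ) t, x ^ (-g) * Real.exp (-(m * x)))
      ≤ Real.Gamma (1 - g) * m ^ (g - 1) := by
  have hint := aux_int_exp_rpow hm hg1
  have h1 : (∫ x in Ioo (0:ℝ) t, x ^ (-g) * Real.exp (-(m * x)))
      ≤ ∫ x in Ioi (0:ℝ), x ^ (-g) * Real.exp (-(m * x)) := by
    refine setIntegral_mono_set hint ?_ Ioo_subset_Ioi_self.eventuallyLE
    filter_upwards [ae_restrict_mem measurableSet_Ioi] with x hx
    have hx0 : (0:ℝ) < x := hx
    positivity
  have h2 : (∫ x in Ioi (0:ℝ), x ^ (-g) * Real.exp (-(m * x)))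
      = (1/m) ^ (1-g) * Real.Gamma (1-g) := by
    rw [← Real.integral_rpow_mul_exp_neg_mul_Ioi (by linarith : (0:ℝ) < 1 - g) hm]
    refine setIntegral_congr_fun measurableSet_Ioi (fun x hx => ?_)
    rw [show (1:ℝ) - g - 1 = -g by ring]
  have h3 : ((1:ℝ)/m) ^ (1-g) = m ^ (g-1) := by
    rw [one_div, Real.inv_rpow hm.le, ← Real.rpow_neg hm.le, show -(1-g) = g-1 by ring]
  rw [h2, h3, mul_comm] at h1
  exact h1

private lemma aux_key0 {m : ℝ} (hm : 0 < m) (t : ℝ) :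
    (∫ x in Ioo (0:ℝ) t, Real.exp (-(m * x))) ≤ m⁻¹ := by
  have h := aux_key1 hm le_rfl zero_lt_one t
  simp only [neg_zero, Real.rpow_zero, one_mul, sub_zero, Real.Gamma_one, zero_sub,
    Real.rpow_neg_one] at h
  exact h

private lemma aux_intC {m g t : ℝ} (hg1 : g < 1) (ht : 0 ≤ t) :
    IntegrableOn (fun u => (t-u) ^ (-g) * Real.exp (-(m * (t-u)))) (Ioo (0:ℝ) t) := by
  have h1 : IntervalIntegrable (fun x => x ^ (-g) * Real.exp (-(m * x))) volume 0 t :=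
    (intervalIntegral.intervalIntegrable_rpow' (by linarith)).mul_continuousOn
      (Continuous.continuousOn (by fun_prop))
  have h2 := (h1.comp_sub_left t).symm
  rw [sub_zero, sub_self] at h2
  exact (intervalIntegrable_iff_integrableOn_Ioo_of_le ht).1 h2

private lemma aux_intB {m d t u : ℝ} (hd : -1 < d) (ht : 0 ≤ t) :
    IntegrableOn (fun v => Real.exp (-(m * (t - v))) * |u - v| ^ d) (Ioo (0:ℝ) t) := by
  have habs : IntervalIntegrable (fun v => |u - v| ^ d) volume 0 t := by
    have := (aux_abs_rpow_II hd u (u - t)).comp_sub_left u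
    rw [sub_self, sub_sub_cancel] at this
    exact this
  have h := habs.continuousOn_mul (g := fun v => Real.exp (-(m * (t - v))))
    (Continuous.continuousOn (by fun_prop))
  exact (intervalIntegrable_iff_integrableOn_Ioo_of_le ht).1 h

private lemma aux_key2 {m d t : ℝ} (hm : 0 < m) (hd1 : -1 < d) (hd0 : d < 0)
    (ht : 0 ≤ t) (u : ℝ) :
    (∫ v in Ioo (0:ℝ) t, Real.exp (-(m * (t - v))) * |u - v| ^ d)
      ≤ (2/(d+1) + 1) * m ^ (-(d+1)) := by
  set r := m⁻¹ with hr_def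
  have hr : 0 < r := inv_pos.2 hm
  set g1 : ℝ → ℝ := (Ioo (u-r) (u+r)).indicator (fun v => |u - v| ^ d) with hg1_def
  set g2 : ℝ → ℝ := fun v => m ^ (-d) * Real.exp (-(m * (t - v))) with hg2_def
  have hg1_nonneg : ∀ v, 0 ≤ g1 v := by
    intro v
    exact Set.indicator_nonneg (fun w _ => Real.rpow_nonneg (abs_nonneg _) _) v
  have hg2_nonneg : ∀ v, 0 ≤ g2 v := by
    intro v
    exact mul_nonneg (Real.rpow_nonneg hm.le _) (Real.exp_pos _).le
  have habsII : IntervalIntegrable (fun v => |u - v| ^ d) volume (u - r) (u + r) := by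
    have := (aux_abs_rpow_II hd1 r (-r)).comp_sub_left u
    rw [sub_neg_eq_add] at this
    exact this
  have habs_int : IntegrableOn (fun v => |u - v| ^ d) (Ioo (u-r) (u+r)) :=
    (intervalIntegrable_iff_integrableOn_Ioo_of_le (by linarith)).1 habsII
  have hg1_int : Integrable g1 volume :=
    (integrable_indicator_iff measurableSet_Ioo).2 habs_int
  have hg2_int : Integrable g2 (volume.restrict (Ioo (0:ℝ) t)) := by
    have hc : Continuous g2 := by rw [hg2_def]; fun_prop
    exact hc.integrableOn_Icc.mono_set Ioo_subset_Icc_self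
  -- pointwise bound
  have h_pt : ∀ v ∈ Ioo (0:ℝ) t,
      Real.exp (-(m * (t - v))) * |u - v| ^ d ≤ g1 v + g2 v := by
    intro v hv
    obtain ⟨hv0, hvt⟩ := hv
    have hexp1 : Real.exp (-(m * (t - v))) ≤ 1 := by
      rw [Real.exp_le_one_iff]
      have h9 : 0 ≤ m * (t - v) := mul_nonneg hm.le (by linarith only [hvt])
      linarith only [h9]
    by_cases hcase : |u - v| < r
    · have hmem : v ∈ Ioo (u - r) (u + r) := by
        rw [abs_lt] at hcase
        constructor <;> linarith only [hcase.1, hcase.2]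
      have h1 : Real.exp (-(m * (t - v))) * |u - v| ^ d ≤ |u - v| ^ d :=
        mul_le_of_le_one_left (Real.rpow_nonneg (abs_nonneg _) _) hexp1
      rw [hg1_def, Set.indicator_of_mem hmem]
      linarith [hg2_nonneg v]
    · push_neg at hcase
      have h1 : |u - v| ^ d ≤ m ^ (-d) := by
        have h2 := Real.rpow_le_rpow_of_nonpos hr hcase hd0.le
        rwa [hr_def, Real.inv_rpow hm.le, ← Real.rpow_neg hm.le] at h2
      calc Real.exp (-(m * (t - v))) * |u - v| ^ d
          ≤ 1 * (m ^ (-d) * Real.exp (-(m * (t - v)))) := by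
            rw [one_mul]
            rw [mul_comm]
            exact mul_le_mul_of_nonneg_right h1 (Real.exp_pos _).le
        _ = g2 v := by rw [one_mul]
        _ ≤ g1 v + g2 v := le_add_of_nonneg_left (hg1_nonneg v)
  -- integral bound
  have hstep : (∫ v in Ioo (0:ℝ) t, Real.exp (-(m * (t - v))) * |u - v| ^ d)
      ≤ (∫ v in Ioo (0:ℝ) t, g1 v) + ∫ v in Ioo (0:ℝ) t, g2 v := by
    have h1 : (∫ v in Ioo (0:ℝ) t, Real.exp (-(m * (t - v))) * |u - v| ^ d)
        ≤ ∫ v in Ioo (0:ℝ) t, (g1 v + g2 v) := by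
      refine integral_mono_of_nonneg ?_ (hg1_int.restrict.add hg2_int) ?_
      · exact Filter.Eventually.of_forall fun v =>
          mul_nonneg (Real.exp_pos _).le (Real.rpow_nonneg (abs_nonneg _) _)
      · filter_upwards [ae_restrict_mem measurableSet_Ioo] with v hv using h_pt v hv
    rwa [integral_add hg1_int.restrict hg2_int] at h1
  -- bound for g1 integral
  have hval : (∫ v in Ioo (0:ℝ) t, g1 v) ≤ 2 * (r ^ (d+1) / (d+1)) := by
    have h1 : (∫ v in Ioo (0:ℝ) t, g1 v) ≤ ∫ v, g1 v :=
      setIntegral_le_integral hg1_int (Filter.Eventually.of_forall hg1_nonneg)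
    have h2 : (∫ v, g1 v) = ∫ v in Ioo (u-r) (u+r), |u - v| ^ d := by
      rw [hg1_def, integral_indicator measurableSet_Ioo]
    have h3 : (∫ v in Ioo (u-r) (u+r), |u - v| ^ d) = ∫ z in (-r)..r, |z| ^ d := by
      rw [← integral_Ioc_eq_integral_Ioo,
        ← intervalIntegral.integral_of_le (by linarith : u - r ≤ u + r)]
      rw [show (fun v => |u - v| ^ d) = (fun v => (fun z => |z| ^ d) (u - v)) from rfl,
        intervalIntegral.integral_comp_sub_left (fun z => |z| ^ d) u]
      congr 1 <;> ring
    have hposp : (∫ z in (0:ℝ)..r, |z| ^ d) = r ^ (d+1) / (d+1) := by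
      rw [intervalIntegral.integral_congr (g := fun z => z ^ d) ?_]
      · rw [integral_rpow (Or.inl hd1), Real.zero_rpow (by linarith : d + 1 ≠ 0), sub_zero]
      · intro z hz
        rw [Set.uIcc_of_le hr.le] at hz
        simp [abs_of_nonneg hz.1]
    have hnegp : (∫ z in (-r)..(0:ℝ), |z| ^ d) = r ^ (d+1) / (d+1) := by
      have h4 := intervalIntegral.integral_comp_neg (a := (0:ℝ)) (b := r) (fun z => |z| ^ d)
      simp only [abs_neg, neg_zero] at h4
      rw [← h4, hposp]
    have h5 := intervalIntegral.integral_add_adjacent_intervals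
      (aux_abs_rpow_II hd1 (-r) 0) (aux_abs_rpow_II hd1 0 r)
    rw [h2, h3, ← h5, hposp, hnegp] at h1
    linarith
  -- bound for g2 integral
  have hval2 : (∫ v in Ioo (0:ℝ) t, g2 v) ≤ m ^ (-d) * m⁻¹ := by
    rw [hg2_def, MeasureTheory.integral_const_mul]
    refine mul_le_mul_of_nonneg_left ?_ (Real.rpow_nonneg hm.le _)
    rw [aux_refl (fun x => Real.exp (-(m * x))) ht]
    exact aux_key0 hm t
  have hrval : r ^ (d+1) = m ^ (-(d+1)) := by
    rw [hr_def, Real.inv_rpow hm.le, ← Real.rpow_neg hm.le]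
  have hmm : m ^ (-d) * m⁻¹ = m ^ (-(d+1)) := by
    rw [← Real.rpow_neg_one m, ← Real.rpow_add hm]
    congr 1; ring
  calc (∫ v in Ioo (0:ℝ) t, Real.exp (-(m * (t - v))) * |u - v| ^ d)
      ≤ (∫ v in Ioo (0:ℝ) t, g1 v) + ∫ v in Ioo (0:ℝ) t, g2 v := hstep
    _ ≤ 2 * (r ^ (d+1) / (d+1)) + m ^ (-d) * m⁻¹ := add_le_add hval hval2
    _ = (2/(d+1) + 1) * m ^ (-(d+1)) := by rw [hrval, hmm]; ring

set_option maxHeartbeats 1000000 in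
theorem stmt_5 (H : ℝ) (hH : H ∈ Set.Ioo (1/2 : ℝ) 1)
    (β : ℝ) (hβ : β ∈ Set.Ioc (1 - 2*H) 1)
    (lam : ℕ → ℝ) (hlam : ∀ i, 0 < lam i) (hmono : Monotone lam)
    (a : ℕ → ℝ) (ha : Summable (fun i => lam i ^ (β - 1) * a i ^ 2)) :
    ∃ C : ℝ, 0 < C ∧ ∀ N : ℕ, ∀ t : ℝ, 0 < t →
      (∫ u in Set.Ioo (0:ℝ) t, ∫ v in Set.Ioo (0:ℝ) t,
          (∑' i : ℕ, if N + 1 ≤ i then Real.exp (-lam i * (2*t - u - v)) * a i ^ 2 else 0) *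
            (H * (2*H - 1) * |u - v| ^ (2*H - 2)))
        ≤ C * lam (N + 1) ^ (-(2*H + β - 1)) * ∑' i : ℕ, lam i ^ (β - 1) * a i ^ 2 := by
  obtain ⟨hH1, hH2⟩ := hH
  obtain ⟨hβ1, hβ2⟩ := hβ
  have hHpos : (0:ℝ) < H := by linarith
  set α := H * (2*H - 1) with hα_def
  have hα : 0 < α := by rw [hα_def]; nlinarith only [hH1, hH2]
  set γ1 := (1 - β) / (2*H) with hγ1_def
  set γ2 := (1 - β) * (2*H - 1) / (2*H) with hγ2_def
  set δ := 2*H - 2 - γ2 with hδ_def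
  set θ := 2*H + β - 1 with hθ_def
  have hγ1_nonneg : 0 ≤ γ1 := div_nonneg (by linarith) (by linarith)
  have hγ1_lt : γ1 < 1 := by rw [hγ1_def, div_lt_one (by linarith)]; linarith
  have hγ2_eq : γ2 = γ1 * (2*H - 1) := by rw [hγ2_def, hγ1_def]; ring
  have hγ2_nonneg : 0 ≤ γ2 := by rw [hγ2_eq]; apply mul_nonneg hγ1_nonneg; linarith
  have hγsum : γ1 + γ2 = 1 - β := by
    rw [hγ1_def, hγ2_def]; field_simp; ring
  have hδ1 : -1 < δ := by
    rw [hδ_def, hγ2_eq]; nlinarith only [hγ1_lt, hγ1_nonneg, hH1]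
  have hδ0 : δ < 0 := by rw [hδ_def]; linarith only [hH2, hγ2_nonneg]
  have hθpos : 0 < θ := by rw [hθ_def]; linarith only [hβ1]
  set γ0 := 1 - β with hγ0_def
  have hγ0 : 0 ≤ γ0 := by rw [hγ0_def]; linarith
  set c0 := γ0 ^ γ0 * Real.exp (-γ0) with hc0_def
  have hc0 : 0 < c0 := by
    rcases eq_or_lt_of_le hγ0 with h | h
    · rw [hc0_def, ← h]
      simp [Real.rpow_zero]
    · rw [hc0_def]
      exact mul_pos (Real.rpow_pos_of_pos h _) (Real.exp_pos _)
  set S := ∑' i : ℕ, lam i ^ (β - 1) * a i ^ 2 with hS_def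
  have hS : 0 ≤ S := tsum_nonneg fun i => mul_nonneg (Real.rpow_nonneg (hlam i).le _) (sq_nonneg _)
  set Cin := 2/(δ+1) + 1 with hCin_def
  have hd1pos : 0 < δ + 1 := by linarith
  have hCin : 0 < Cin := by rw [hCin_def]; positivity
  set CΓ := Real.Gamma (1 - γ1) with hCΓ_def
  have hCΓ : 0 < CΓ := Real.Gamma_pos_of_pos (by linarith)
  have h2γ0 : (0:ℝ) < 2 ^ γ0 := Real.rpow_pos_of_pos two_pos _
  have h2θ : (0:ℝ) < 2 ^ θ := Real.rpow_pos_of_pos two_pos _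
  clear_value α γ1 γ2 δ θ γ0 c0 S Cin CΓ
  refine ⟨c0 * 2 ^ γ0 * α * Cin * CΓ * 2 ^ θ,
    mul_pos (mul_pos (mul_pos (mul_pos (mul_pos hc0 h2γ0) hα) hCin) hCΓ) h2θ, ?_⟩
  intro N t ht
  set μ := lam (N+1) / 2 with hμ_def
  have hμ : 0 < μ := by rw [hμ_def]; exact half_pos (hlam _)
  clear_value μ
  set A := c0 * 2 ^ γ0 * α * S with hA_def
  have hA : 0 ≤ A := by
    rw [hA_def]
    exact mul_nonneg (mul_nonneg (mul_nonneg hc0.le h2γ0.le) hα.le) hS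
  clear_value A
  -- nonnegativity of the integrand
  have hnn : ∀ u v : ℝ, 0 ≤
      (∑' i : ℕ, if N + 1 ≤ i then Real.exp (-lam i * (2*t - u - v)) * a i ^ 2 else 0) *
        (α * |u - v| ^ (2*H - 2)) := by
    intro u v
    refine mul_nonneg (tsum_nonneg fun i => ?_)
      (mul_nonneg hα.le (Real.rpow_nonneg (abs_nonneg _) _))
    by_cases hi : N + 1 ≤ i
    · rw [if_pos hi]; positivity
    · rw [if_neg hi]
  -- pointwise bound
  have hpt : ∀ u ∈ Ioo (0:ℝ) t, ∀ v ∈ Ioo (0:ℝ) t,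
      (∑' i : ℕ, if N + 1 ≤ i then Real.exp (-lam i * (2*t - u - v)) * a i ^ 2 else 0) *
        (α * |u - v| ^ (2*H - 2))
      ≤ A * ((t-u) ^ (-γ1) * Real.exp (-(μ * (t-u)))) *
          (Real.exp (-(μ * (t-v))) * |u - v| ^ δ) := by
    intro u hu v hv
    obtain ⟨hu0, hut⟩ := hu
    obtain ⟨hv0, hvt⟩ := hv
    have hx : 0 < t - u := by linarith only [hut]
    have hy : 0 < t - v := by linarith only [hvt]
    have hs : 0 < 2*t - u - v := by linarith only [hu0, hut, hv0, hvt]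
    by_cases huv : u = v
    · subst huv
      rw [sub_self, abs_zero, Real.zero_rpow (show 2*H-2 ≠ 0 from (by linarith only [hH2] : 2*H-2 < 0).ne),
        Real.zero_rpow hδ0.ne, mul_zero, mul_zero, mul_zero, mul_zero]
    · have hw : 0 < |u - v| := abs_pos.2 (sub_ne_zero.2 huv)
      set s := 2*t - u - v with hs_def
      clear_value s
      have hD : 0 ≤ c0 * 2 ^ γ0 * (s ^ (β-1) * Real.exp (-(μ * s))) :=
        mul_nonneg (mul_nonneg hc0.le h2γ0.le)
          (mul_nonneg (Real.rpow_nonneg hs.le _) (Real.exp_pos _).le)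
      have hterm : ∀ i : ℕ, (if N + 1 ≤ i then Real.exp (-lam i * s) * a i ^ 2 else 0)
          ≤ (c0 * 2 ^ γ0 * (s ^ (β-1) * Real.exp (-(μ * s)))) * (lam i ^ (β-1) * a i ^ 2) := by
        intro i
        by_cases hi : N + 1 ≤ i
        · rw [if_pos hi]
          have hli : 0 < lam i := hlam i
          have hsplit : Real.exp (-lam i * s)
              = Real.exp (-(lam i * (s/2))) * Real.exp (-(lam i * (s/2))) := by
            rw [← Real.exp_add]; congr 1; ring
          have h1 : Real.exp (-(lam i * (s/2))) ≤ c0 * (lam i * (s/2)) ^ (-γ0) := by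
            have h := aux_exp_le hγ0 (mul_pos hli (half_pos hs))
            rwa [← hc0_def] at h
          have h2 : Real.exp (-(lam i * (s/2))) ≤ Real.exp (-(μ * s)) := by
            apply Real.exp_le_exp.2
            have hle : lam (N+1) ≤ lam i := hmono hi
            apply neg_le_neg
            have h9 : lam (N+1) * s ≤ lam i * s := mul_le_mul_of_nonneg_right hle hs.le
            calc μ * s = lam (N+1) * s / 2 := by rw [hμ_def]; ring
              _ ≤ lam i * s / 2 := by linarith only [h9]
              _ = lam i * (s/2) := by ring
          have h3 : (lam i * (s/2)) ^ (-γ0) = 2 ^ γ0 * (lam i ^ (β-1) * s ^ (β-1)) := by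
            have h2β : (2:ℝ) ^ γ0 = ((2:ℝ) ^ (β-1))⁻¹ := by
              rw [show γ0 = -(β-1) by rw [hγ0_def]; ring, Real.rpow_neg (by norm_num)]
            have h2βpos : (0:ℝ) < (2:ℝ) ^ (β-1) := Real.rpow_pos_of_pos two_pos _
            rw [show -γ0 = β - 1 by rw [hγ0_def]; ring,
              Real.mul_rpow hli.le (half_pos hs).le,
              Real.div_rpow hs.le (by norm_num), h2β]
            field_simp
          calc Real.exp (-lam i * s) * a i ^ 2
              = Real.exp (-(lam i * (s/2))) * Real.exp (-(lam i * (s/2))) * a i ^ 2 := by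
                rw [← hsplit]
            _ ≤ (c0 * (lam i * (s/2)) ^ (-γ0)) * Real.exp (-(μ * s)) * a i ^ 2 := by
                refine mul_le_mul_of_nonneg_right ?_ (sq_nonneg _)
                exact mul_le_mul h1 h2 (Real.exp_pos _).le
                  (mul_nonneg hc0.le (Real.rpow_nonneg (mul_pos hli (half_pos hs)).le _))
            _ = (c0 * 2 ^ γ0 * (s ^ (β-1) * Real.exp (-(μ * s)))) *
                  (lam i ^ (β-1) * a i ^ 2) := by
                rw [h3]; ring
        · rw [if_neg hi]
          exact mul_nonneg hD (mul_nonneg (Real.rpow_nonneg (hlam i).le _) (sq_nonneg _))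
      have hsum_rhs : Summable (fun i =>
          (c0 * 2 ^ γ0 * (s ^ (β-1) * Real.exp (-(μ * s)))) * (lam i ^ (β-1) * a i ^ 2)) :=
        ha.mul_left _
      have hsum_lhs : Summable (fun i : ℕ =>
          if N + 1 ≤ i then Real.exp (-lam i * s) * a i ^ 2 else 0) := by
        refine Summable.of_nonneg_of_le (fun i => ?_) hterm hsum_rhs
        by_cases hi : N + 1 ≤ i
        · rw [if_pos hi]; positivity
        · rw [if_neg hi]
      have htsum : (∑' i : ℕ, if N + 1 ≤ i then Real.exp (-lam i * s) * a i ^ 2 else 0)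
          ≤ (c0 * 2 ^ γ0 * (s ^ (β-1) * Real.exp (-(μ * s)))) * S := by
        calc (∑' i : ℕ, if N + 1 ≤ i then Real.exp (-lam i * s) * a i ^ 2 else 0)
            ≤ ∑' i : ℕ, (c0 * 2 ^ γ0 * (s ^ (β-1) * Real.exp (-(μ * s)))) *
                (lam i ^ (β-1) * a i ^ 2) := Summable.tsum_le_tsum hterm hsum_lhs hsum_rhs
          _ = _ := by rw [hS_def, tsum_mul_left]
      have hw_le_s : |u - v| ≤ s := by
        rw [abs_sub_le_iff]
        constructor <;> (rw [hs_def]; linarith only [hu0, hut, hv0, hvt])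
      have hcore : s ^ (β-1) * Real.exp (-(μ*s)) * |u - v| ^ (2*H-2)
          ≤ ((t-u) ^ (-γ1) * Real.exp (-(μ*(t-u)))) *
              (Real.exp (-(μ*(t-v))) * |u - v| ^ δ) := by
        have e1 : s ^ (β-1) = s ^ (-γ1) * s ^ (-γ2) := by
          rw [← Real.rpow_add hs]; congr 1; linarith only [hγsum, hγ0_def]
        have e2 : Real.exp (-(μ*s)) = Real.exp (-(μ*(t-u))) * Real.exp (-(μ*(t-v))) := by
          rw [← Real.exp_add]; congr 1; rw [hs_def]; ring
        have i1 : s ^ (-γ1) ≤ (t-u) ^ (-γ1) :=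
          Real.rpow_le_rpow_of_nonpos hx (by rw [hs_def]; linarith only [hv0, hvt]) (by linarith only [hγ1_nonneg])
        have i2 : s ^ (-γ2) ≤ |u - v| ^ (-γ2) :=
          Real.rpow_le_rpow_of_nonpos hw hw_le_s (by linarith only [hγ2_nonneg])
        have e3 : |u - v| ^ (-γ2) * |u - v| ^ (2*H-2) = |u - v| ^ δ := by
          rw [← Real.rpow_add hw]; congr 1; rw [hδ_def]; ring
        calc s ^ (β-1) * Real.exp (-(μ*s)) * |u - v| ^ (2*H-2)
            = (s ^ (-γ1) * s ^ (-γ2)) *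
                (Real.exp (-(μ*(t-u))) * Real.exp (-(μ*(t-v)))) * |u - v| ^ (2*H-2) := by
              rw [← e1, ← e2]
          _ ≤ ((t-u) ^ (-γ1) * |u - v| ^ (-γ2)) *
                (Real.exp (-(μ*(t-u))) * Real.exp (-(μ*(t-v)))) * |u - v| ^ (2*H-2) := by
              refine mul_le_mul_of_nonneg_right (mul_le_mul_of_nonneg_right ?_
                (mul_nonneg (Real.exp_pos _).le (Real.exp_pos _).le))
                (Real.rpow_nonneg (abs_nonneg _) _)
              exact mul_le_mul i1 i2 (Real.rpow_nonneg hs.le _) (Real.rpow_nonneg hx.le _)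
          _ = ((t-u) ^ (-γ1) * Real.exp (-(μ*(t-u)))) *
                (Real.exp (-(μ*(t-v))) * (|u - v| ^ (-γ2) * |u - v| ^ (2*H-2))) := by ring
          _ = _ := by rw [e3]
      calc (∑' i : ℕ, if N + 1 ≤ i then Real.exp (-lam i * s) * a i ^ 2 else 0) *
            (α * |u - v| ^ (2*H-2))
          ≤ ((c0 * 2 ^ γ0 * (s ^ (β-1) * Real.exp (-(μ * s)))) * S) *
              (α * |u - v| ^ (2*H-2)) := by
            refine mul_le_mul_of_nonneg_right htsum
              (mul_nonneg hα.le (Real.rpow_nonneg (abs_nonneg _) _))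
        _ = (c0 * 2 ^ γ0 * α * S) *
              (s ^ (β-1) * Real.exp (-(μ*s)) * |u - v| ^ (2*H-2)) := by ring
        _ ≤ (c0 * 2 ^ γ0 * α * S) *
              (((t-u) ^ (-γ1) * Real.exp (-(μ*(t-u)))) *
                (Real.exp (-(μ*(t-v))) * |u - v| ^ δ)) := by
            refine mul_le_mul_of_nonneg_left hcore ?_
            exact mul_nonneg (mul_nonneg (mul_nonneg hc0.le h2γ0.le) hα.le) hS
        _ = A * ((t-u) ^ (-γ1) * Real.exp (-(μ * (t-u)))) *
              (Real.exp (-(μ * (t-v))) * |u - v| ^ δ) := by rw [hA_def]; ring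
  -- step B: inner integral bound
  have hstepB : ∀ u ∈ Ioo (0:ℝ) t,
      (∫ v in Ioo (0:ℝ) t,
        (∑' i : ℕ, if N + 1 ≤ i then Real.exp (-lam i * (2*t - u - v)) * a i ^ 2 else 0) *
          (α * |u - v| ^ (2*H - 2)))
      ≤ (A * (Cin * μ ^ (-(δ+1)))) * ((t-u) ^ (-γ1) * Real.exp (-(μ * (t-u)))) := by
    intro u hu
    have hfu : 0 ≤ (t-u) ^ (-γ1) * Real.exp (-(μ*(t-u))) := by
      have : 0 < t - u := by linarith only [hu.2]
      positivity
    calc (∫ v in Ioo (0:ℝ) t,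
          (∑' i : ℕ, if N + 1 ≤ i then Real.exp (-lam i * (2*t - u - v)) * a i ^ 2 else 0) *
            (α * |u - v| ^ (2*H - 2)))
        ≤ ∫ v in Ioo (0:ℝ) t, (A * ((t-u) ^ (-γ1) * Real.exp (-(μ*(t-u))))) *
            (Real.exp (-(μ*(t-v))) * |u - v| ^ δ) := by
          refine integral_mono_of_nonneg (Filter.Eventually.of_forall fun v => hnn u v)
            ((aux_intB hδ1 ht.le).const_mul _) ?_
          filter_upwards [ae_restrict_mem measurableSet_Ioo] with v hv
          exact hpt u hu v hv
      _ = (A * ((t-u) ^ (-γ1) * Real.exp (-(μ*(t-u))))) *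
            ∫ v in Ioo (0:ℝ) t, Real.exp (-(μ*(t-v))) * |u - v| ^ δ := by
          rw [MeasureTheory.integral_const_mul]
      _ ≤ (A * ((t-u) ^ (-γ1) * Real.exp (-(μ*(t-u))))) * (Cin * μ ^ (-(δ+1))) := by
          refine mul_le_mul_of_nonneg_left ?_ (mul_nonneg hA hfu)
          rw [hCin_def]
          exact aux_key2 hμ hδ1 hδ0 ht.le u
      _ = (A * (Cin * μ ^ (-(δ+1)))) * ((t-u) ^ (-γ1) * Real.exp (-(μ * (t-u)))) := by ring
  -- step C: outer integral
  have hBnn : 0 ≤ A * (Cin * μ ^ (-(δ+1))) :=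
    mul_nonneg hA (mul_nonneg hCin.le (Real.rpow_nonneg hμ.le _))
  calc (∫ u in Ioo (0:ℝ) t, ∫ v in Ioo (0:ℝ) t,
        (∑' i : ℕ, if N + 1 ≤ i then Real.exp (-lam i * (2*t - u - v)) * a i ^ 2 else 0) *
          (α * |u - v| ^ (2*H - 2)))
      ≤ ∫ u in Ioo (0:ℝ) t, (A * (Cin * μ ^ (-(δ+1)))) *
          ((t-u) ^ (-γ1) * Real.exp (-(μ * (t-u)))) := by
        refine integral_mono_of_nonneg ?_ ((aux_intC hγ1_lt ht.le).const_mul _) ?_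
        · refine Filter.Eventually.of_forall fun u => ?_
          exact setIntegral_nonneg measurableSet_Ioo fun v _ => hnn u v
        · filter_upwards [ae_restrict_mem measurableSet_Ioo] with u hu
          exact hstepB u hu
    _ = (A * (Cin * μ ^ (-(δ+1)))) *
          ∫ u in Ioo (0:ℝ) t, (t-u) ^ (-γ1) * Real.exp (-(μ * (t-u))) := by
        rw [MeasureTheory.integral_const_mul]
    _ = (A * (Cin * μ ^ (-(δ+1)))) *
          ∫ x in Ioo (0:ℝ) t, x ^ (-γ1) * Real.exp (-(μ * x)) := by
        rw [aux_refl (fun x => x ^ (-γ1) * Real.exp (-(μ * x))) ht.le]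
    _ ≤ (A * (Cin * μ ^ (-(δ+1)))) * (CΓ * μ ^ (γ1 - 1)) := by
        refine mul_le_mul_of_nonneg_left ?_ hBnn
        rw [hCΓ_def]
        exact aux_key1 hμ hγ1_nonneg hγ1_lt t
    _ = (c0 * 2 ^ γ0 * α * Cin * CΓ * 2 ^ θ) * lam (N + 1) ^ (-θ) * S := by
        have h1 : μ ^ (-(δ+1)) * μ ^ (γ1-1) = lam (N+1) ^ (-θ) * 2 ^ θ := by
          rw [← Real.rpow_add hμ,
            show -(δ+1) + (γ1-1) = -θ by rw [hδ_def, hθ_def]; linarith only [hγsum, hγ0_def],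
            hμ_def, Real.div_rpow (hlam _).le (by norm_num : (0:ℝ) ≤ 2),
            Real.rpow_neg (by norm_num : (0:ℝ) ≤ 2), div_inv_eq_mul]
        calc (A * (Cin * μ ^ (-(δ+1)))) * (CΓ * μ ^ (γ1 - 1))
            = (c0 * 2 ^ γ0 * α * S) * Cin * CΓ * (μ ^ (-(δ+1)) * μ ^ (γ1-1)) := by
              rw [hA_def]; ring
          _ = _ := by rw [h1]; ring
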